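/- Let v_1,…,v_5 ∈ ℝ³ be the edge vectors of a generic closed pentagon (v_1+⋯+v_5 = 0, all Δ_i ≠ 0) which is regular, and let u_1,…,u_5 be a support system. Then ⟨u_2 − u_1, [u_3 − u_1, u_4 − u_1]⟩ = 0 and ⟨u_3 − u_1, [u_4 − u_1, u_5 − u_1]⟩ = 0; that is, the five vertices u_1,…,u_5 of the derived pentagon lie in a common plane. -/

import Mathlib

open Matrix

private lemma collinear_of_cross_eq_zero {x w : Fin 3 → ℝ} (hw : w ≠ 0) (h : x ⨯₃ w = 0) :
    ∃ c : ℝ, x = c • w := by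
  rw [cross_apply] at h
  have h0 : x 1 * w 2 - x 2 * w 1 = 0 := by simpa using congrFun h 0
  have h1 : x 2 * w 0 - x 0 * w 2 = 0 := by simpa using congrFun h 1
  have h2 : x 0 * w 1 - x 1 * w 0 = 0 := by simpa using congrFun h 2
  by_cases hw0 : w 0 = 0
  · by_cases hw1 : w 1 = 0
    · have hw2 : w 2 ≠ 0 := by
        intro hw2; exact hw (funext fun i => by fin_cases i <;> simp [hw0, hw1, hw2])
      refine ⟨x 2 / w 2, funext fun i => ?_⟩
      fin_cases i <;> simp [Pi.smul_apply, smul_eq_mul] <;> field_simp <;> nlinarith [h0, h1, h2]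
    · refine ⟨x 1 / w 1, funext fun i => ?_⟩
      fin_cases i <;> simp [Pi.smul_apply, smul_eq_mul] <;> field_simp <;> nlinarith [h0, h1, h2]
  · refine ⟨x 0 / w 0, funext fun i => ?_⟩
    fin_cases i <;> simp [Pi.smul_apply, smul_eq_mul] <;> field_simp <;> nlinarith [h0, h1, h2]

private lemma exists_smul_cross {x a b : Fin 3 → ℝ} (hab : a ⨯₃ b ≠ 0) (ha : x ⬝ᵥ a = 0)
    (hb : x ⬝ᵥ b = 0) : ∃ c : ℝ, x = c • (a ⨯₃ b) := by
  apply collinear_of_cross_eq_zero hab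
  have ha' : x 0 * a 0 + x 1 * a 1 + x 2 * a 2 = 0 := by
    simpa [dotProduct, Fin.sum_univ_three] using ha
  have hb' : x 0 * b 0 + x 1 * b 1 + x 2 * b 2 = 0 := by
    simpa [dotProduct, Fin.sum_univ_three] using hb
  funext i
  fin_cases i <;> simp [cross_apply] <;>
    [linear_combination a 0 * hb' - b 0 * ha'; linear_combination a 1 * hb' - b 1 * ha';
     linear_combination a 2 * hb' - b 2 * ha']

private lemma smul_cross_smul (c d : ℝ) (x y : Fin 3 → ℝ) :
    (c • x) ⨯₃ (d • y) = (c * d) • (x ⨯₃ y) := by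
  funext i; fin_cases i <;> simp [cross_apply] <;> ring

private lemma cross_cross_same (a b c : Fin 3 → ℝ) :
    (a ⨯₃ b) ⨯₃ (b ⨯₃ c) = (a ⬝ᵥ (b ⨯₃ c)) • b := by
  funext i; fin_cases i <;> simp [cross_apply, dotProduct, Fin.sum_univ_three] <;> ring

set_option maxHeartbeats 2000000 in
/-- For a generic regular closed pentagon with edge vectors `v₁, …, v₅`
and support system `u₁, …, u₅`, both `⟨u₂ - u₁, [u₃ - u₁, u₄ - u₁]⟩ = 0` and
`⟨u₃ - u₁, [u₄ - u₁, u₅ - u₁]⟩ = 0`: the five vertices of the derived pentagon lie in a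
common plane. -/
theorem derived_pentagon_planar (v₁ v₂ v₃ v₄ v₅ : Fin 3 → ℝ)
    (hclosed : v₁ + v₂ + v₃ + v₄ + v₅ = 0)
    (hΔ₁ : v₁ ⬝ᵥ (v₂ ⨯₃ v₃) ≠ 0)
    (hΔ₂ : v₂ ⬝ᵥ (v₃ ⨯₃ v₄) ≠ 0)
    (hΔ₃ : v₃ ⬝ᵥ (v₄ ⨯₃ v₅) ≠ 0)
    (hΔ₄ : v₄ ⬝ᵥ (v₅ ⨯₃ v₁) ≠ 0)
    (hΔ₅ : v₅ ⬝ᵥ (v₁ ⨯₃ v₂) ≠ 0)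
    (u₁ u₂ u₃ u₄ u₅ : Fin 3 → ℝ)
    (h₁₂ : u₁ ⨯₃ u₂ = v₂) (h₂₃ : u₂ ⨯₃ u₃ = v₃) (h₃₄ : u₃ ⨯₃ u₄ = v₄)
    (h₄₅ : u₄ ⨯₃ u₅ = v₅) (h₅₁ : u₅ ⨯₃ u₁ = v₁) :
    (u₂ - u₁) ⬝ᵥ ((u₃ - u₁) ⨯₃ (u₄ - u₁)) = 0 ∧
      (u₃ - u₁) ⬝ᵥ ((u₄ - u₁) ⨯₃ (u₅ - u₁)) = 0 := by
  have hv5 : v₅ = -v₁ - v₂ - v₃ - v₄ := by linear_combination hclosed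
  subst hv5
  -- the vᵢ and the cross products of consecutive vᵢ are nonzero
  have hv1 : v₁ ≠ 0 := fun hz => hΔ₁ (by rw [hz, zero_dotProduct])
  have hv2 : v₂ ≠ 0 := fun hz => hΔ₂ (by rw [hz, zero_dotProduct])
  have hv3 : v₃ ≠ 0 := fun hz => hΔ₃ (by rw [hz, zero_dotProduct])
  have hv4 : v₄ ≠ 0 := fun hz => hΔ₄ (by rw [hz, zero_dotProduct])
  have hv5 : (-v₁ - v₂ - v₃ - v₄ : Fin 3 → ℝ) ≠ 0 := fun hz => hΔ₅ (by rw [hz, zero_dotProduct])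
  have hn1 : v₁ ⨯₃ v₂ ≠ 0 := fun hz => hΔ₅ (by rw [hz, dotProduct_zero])
  have hn2 : v₂ ⨯₃ v₃ ≠ 0 := fun hz => hΔ₁ (by rw [hz, dotProduct_zero])
  have hn3 : v₃ ⨯₃ v₄ ≠ 0 := fun hz => hΔ₂ (by rw [hz, dotProduct_zero])
  have hn4 : v₄ ⨯₃ (-v₁ - v₂ - v₃ - v₄) ≠ 0 := fun hz => hΔ₃ (by rw [hz, dotProduct_zero])
  have hn5 : (-v₁ - v₂ - v₃ - v₄) ⨯₃ v₁ ≠ 0 := fun hz => hΔ₄ (by rw [hz, dotProduct_zero])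
  -- each uᵢ is a multiple of vᵢ ⨯₃ vᵢ₊₁
  obtain ⟨c₁, hu1⟩ := exists_smul_cross hn1 (by rw [← h₅₁]; exact dot_cross_self _ _)
    (by rw [← h₁₂]; exact dot_self_cross _ _)
  obtain ⟨c₂, hu2⟩ := exists_smul_cross hn2 (by rw [← h₁₂]; exact dot_cross_self _ _)
    (by rw [← h₂₃]; exact dot_self_cross _ _)
  obtain ⟨c₃, hu3⟩ := exists_smul_cross hn3 (by rw [← h₂₃]; exact dot_cross_self _ _)
    (by rw [← h₃₄]; exact dot_self_cross _ _)
  obtain ⟨c₄, hu4⟩ := exists_smul_cross hn4 (by rw [← h₃₄]; exact dot_cross_self _ _)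
    (by rw [← h₄₅]; exact dot_self_cross _ _)
  obtain ⟨c₅, hu5⟩ := exists_smul_cross hn5 (by rw [← h₄₅]; exact dot_cross_self _ _)
    (by rw [← h₅₁]; exact dot_self_cross _ _)
  -- the scalar relations cᵢ * cᵢ₊₁ * Δᵢ = 1
  have mkrel : ∀ (c d : ℝ) (a b e : Fin 3 → ℝ), b ≠ 0 →
      (c • (a ⨯₃ b)) ⨯₃ (d • (b ⨯₃ e)) = b → c * d * (a ⬝ᵥ (b ⨯₃ e)) = 1 := by
    intro c d a b e hb h
    rw [smul_cross_smul, cross_cross_same, smul_smul] at h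
    have key : (c * d * (a ⬝ᵥ (b ⨯₃ e)) - 1) • b = 0 := by
      rw [sub_smul, one_smul, h, sub_self]
    rcases smul_eq_zero.mp key with h' | h'
    · linarith [sub_eq_zero.mp h']
    · exact absurd h' hb
  have R₁ : c₁ * c₂ * (v₁ ⬝ᵥ (v₂ ⨯₃ v₃)) = 1 :=
    mkrel _ _ _ _ _ hv2 (by rw [← hu1, ← hu2]; exact h₁₂)
  have R₂ : c₂ * c₃ * (v₂ ⬝ᵥ (v₃ ⨯₃ v₄)) = 1 :=
    mkrel _ _ _ _ _ hv3 (by rw [← hu2, ← hu3]; exact h₂₃)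
  have R₃ : c₃ * c₄ * (v₃ ⬝ᵥ (v₄ ⨯₃ (-v₁ - v₂ - v₃ - v₄))) = 1 :=
    mkrel _ _ _ _ _ hv4 (by rw [← hu3, ← hu4]; exact h₃₄)
  have R₄ : c₄ * c₅ * (v₄ ⬝ᵥ ((-v₁ - v₂ - v₃ - v₄) ⨯₃ v₁)) = 1 :=
    mkrel _ _ _ _ _ hv5 (by rw [← hu4, ← hu5]; exact h₄₅)
  have R₅ : c₅ * c₁ * ((-v₁ - v₂ - v₃ - v₄) ⬝ᵥ (v₁ ⨯₃ v₂)) = 1 :=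
    mkrel _ _ _ _ _ hv1 (by rw [← hu5, ← hu1]; exact h₅₁)
  have hc1 : c₁ ≠ 0 := fun hz => by rw [hz] at R₁; simp at R₁
  have hc2 : c₂ ≠ 0 := fun hz => by rw [hz] at R₂; simp at R₂
  have hc3 : c₃ ≠ 0 := fun hz => by rw [hz] at R₃; simp at R₃
  have hc4 : c₄ ≠ 0 := fun hz => by rw [hz] at R₄; simp at R₄
  have hc5 : c₅ ≠ 0 := fun hz => by rw [hz] at R₅; simp at R₅
  have hd1 : v₁ ⬝ᵥ (v₂ ⨯₃ v₃) = (c₁ * c₂)⁻¹ := by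
    exact eq_inv_of_mul_eq_one_right (by linear_combination R₁)
  have hd2 : v₂ ⬝ᵥ (v₃ ⨯₃ v₄) = (c₂ * c₃)⁻¹ := by
    exact eq_inv_of_mul_eq_one_right (by linear_combination R₂)
  have hd3 : v₃ ⬝ᵥ (v₄ ⨯₃ (-v₁ - v₂ - v₃ - v₄)) = (c₃ * c₄)⁻¹ := by
    exact eq_inv_of_mul_eq_one_right (by linear_combination R₃)
  have hd4 : v₄ ⬝ᵥ ((-v₁ - v₂ - v₃ - v₄) ⨯₃ v₁) = (c₄ * c₅)⁻¹ := by
    exact eq_inv_of_mul_eq_one_right (by linear_combination R₄)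
  have hd5 : (-v₁ - v₂ - v₃ - v₄) ⬝ᵥ (v₁ ⨯₃ v₂) = (c₅ * c₁)⁻¹ := by
    exact eq_inv_of_mul_eq_one_right (by linear_combination R₅)
  constructor
  · have E1 : (u₂ - u₁) ⬝ᵥ ((u₃ - u₁) ⨯₃ (u₄ - u₁)) =
        c₂ * c₃ * c₄ * ((v₂ ⬝ᵥ (v₃ ⨯₃ v₄)) * (v₃ ⬝ᵥ (v₄ ⨯₃ (-v₁ - v₂ - v₃ - v₄))))
        + c₁ * c₃ * c₄ * ((v₃ ⬝ᵥ (v₄ ⨯₃ (-v₁ - v₂ - v₃ - v₄))) * (v₁ ⬝ᵥ (v₂ ⨯₃ v₃)))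
        + c₁ * c₃ * c₄ * ((v₃ ⬝ᵥ (v₄ ⨯₃ (-v₁ - v₂ - v₃ - v₄))) * ((-v₁ - v₂ - v₃ - v₄) ⬝ᵥ (v₁ ⨯₃ v₂)))
        - c₁ * c₂ * c₄ * ((v₁ ⬝ᵥ (v₂ ⨯₃ v₃)) * (v₃ ⬝ᵥ (v₄ ⨯₃ (-v₁ - v₂ - v₃ - v₄))))
        - c₁ * c₂ * c₄ * ((v₁ ⬝ᵥ (v₂ ⨯₃ v₃)) * (v₄ ⬝ᵥ ((-v₁ - v₂ - v₃ - v₄) ⨯₃ v₁)))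
        - c₁ * c₂ * c₃ * ((v₁ ⬝ᵥ (v₂ ⨯₃ v₃)) * (v₂ ⬝ᵥ (v₃ ⨯₃ v₄))) := by
      rw [hu1, hu2, hu3, hu4]
      simp only [cross_apply, dotProduct, Fin.sum_univ_three, Pi.sub_apply, Pi.smul_apply,
        Pi.neg_apply, smul_eq_mul, Matrix.cons_val_zero, Matrix.cons_val_one, Matrix.cons_val_two,
        Matrix.head_cons, Matrix.tail_cons]
      ring
    rw [E1, hd1, hd2, hd3, hd4, hd5]
    field_simp
    ring
  · have E2 : (u₃ - u₁) ⬝ᵥ ((u₄ - u₁) ⨯₃ (u₅ - u₁)) =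
        c₃ * c₄ * c₅ * ((v₃ ⬝ᵥ (v₄ ⨯₃ (-v₁ - v₂ - v₃ - v₄))) * (v₄ ⬝ᵥ ((-v₁ - v₂ - v₃ - v₄) ⨯₃ v₁)))
        - c₁ * c₄ * c₅ * ((v₄ ⬝ᵥ ((-v₁ - v₂ - v₃ - v₄) ⨯₃ v₁)) * ((-v₁ - v₂ - v₃ - v₄) ⬝ᵥ (v₁ ⨯₃ v₂)))
        - c₁ * c₃ * c₅ * ((v₂ ⬝ᵥ (v₃ ⨯₃ v₄)) * ((-v₁ - v₂ - v₃ - v₄) ⬝ᵥ (v₁ ⨯₃ v₂)))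
        - c₁ * c₃ * c₅ * ((v₃ ⬝ᵥ (v₄ ⨯₃ (-v₁ - v₂ - v₃ - v₄))) * ((-v₁ - v₂ - v₃ - v₄) ⬝ᵥ (v₁ ⨯₃ v₂)))
        + c₁ * c₃ * c₄ * ((v₃ ⬝ᵥ (v₄ ⨯₃ (-v₁ - v₂ - v₃ - v₄))) * (v₁ ⬝ᵥ (v₂ ⨯₃ v₃)))
        + c₁ * c₃ * c₄ * ((v₃ ⬝ᵥ (v₄ ⨯₃ (-v₁ - v₂ - v₃ - v₄))) * ((-v₁ - v₂ - v₃ - v₄) ⬝ᵥ (v₁ ⨯₃ v₂))) := by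
      rw [hu1, hu3, hu4, hu5]
      simp only [cross_apply, dotProduct, Fin.sum_univ_three, Pi.sub_apply, Pi.smul_apply,
        Pi.neg_apply, smul_eq_mul, Matrix.cons_val_zero, Matrix.cons_val_one, Matrix.cons_val_two,
        Matrix.head_cons, Matrix.tail_cons]
      ring
    rw [E2, hd1, hd2, hd3, hd4, hd5]
    field_simp
    ring
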